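/- Let S be an n × n column-substochastic nonnegative matrix (each column sum ≤ 1) which is not column-stochastic (some column sum < 1). Let x ∈ ℝⁿ have strictly positive entries and satisfy S x ≤ x entrywise. Then there exists an n × n column-stochastic nonnegative matrix A with A ≥ S entrywise and A x = x. -/

import Mathlib

theorem substochastic_fixed_point_extension {n : ℕ} (S : Matrix (Fin n) (Fin n) ℝ)
    (hS : ∀ i j, 0 ≤ S i j)
    (hsub : ∀ j, ∑ i, S i j ≤ 1) (hnot : ∃ j, ∑ i, S i j < 1)
    (x : Fin n → ℝ) (hx : ∀ i, 0 < x i) (hSx : ∀ i, S.mulVec x i ≤ x i) :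
    ∃ A : Matrix (Fin n) (Fin n) ℝ, (∀ i j, 0 ≤ A i j) ∧ (∀ j, ∑ i, A i j = 1) ∧
      (∀ i j, S i j ≤ A i j) ∧ A.mulVec x = x := by
  set φ : Fin n → ℝ := fun i => x i - S.mulVec x i with hφ
  set ψ : Fin n → ℝ := fun j => 1 - ∑ i, S i j with hψ
  set lam : ℝ := ∑ j, ψ j * x j with hlam
  have hφ0 : ∀ i, 0 ≤ φ i := fun i => sub_nonneg.2 (hSx i)
  have hψ0 : ∀ j, 0 ≤ ψ j := fun j => sub_nonneg.2 (hsub j)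
  have hlam0 : 0 < lam := by
    obtain ⟨j0, hj0⟩ := hnot
    apply Finset.sum_pos' (fun j _ => mul_nonneg (hψ0 j) (hx j).le)
    exact ⟨j0, Finset.mem_univ j0, mul_pos (sub_pos.2 hj0) (hx j0)⟩
  have hsumφ : ∑ i, φ i = lam := by
    simp only [hφ, hψ, hlam, Matrix.mulVec, dotProduct]
    rw [Finset.sum_sub_distrib, Finset.sum_comm]
    simp [sub_mul, Finset.sum_sub_distrib, Finset.sum_mul]
  refine ⟨fun i j => S i j + φ i * ψ j / lam, ?_, ?_, ?_, ?_⟩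
  · intro i j
    have := div_nonneg (mul_nonneg (hφ0 i) (hψ0 j)) hlam0.le
    linarith [hS i j]
  · intro j
    rw [Finset.sum_add_distrib]
    have : ∑ i, φ i * ψ j / lam = lam * ψ j / lam := by
      rw [← Finset.sum_div, ← Finset.sum_mul, hsumφ]
    rw [this, mul_comm, mul_div_assoc, div_self hlam0.ne', mul_one]
    have : ψ j = 1 - ∑ i, S i j := rfl
    linarith
  · intro i j
    have := div_nonneg (mul_nonneg (hφ0 i) (hψ0 j)) hlam0.le
    linarith
  · funext i
    simp only [Matrix.mulVec, dotProduct]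
    have : ∑ j, (S i j + φ i * ψ j / lam) * x j
        = (∑ j, S i j * x j) + φ i * lam / lam := by
      have h : ∀ j, (S i j + φ i * ψ j / lam) * x j
          = S i j * x j + φ i * (ψ j * x j) / lam := fun j => by ring
      simp_rw [h, Finset.sum_add_distrib, ← Finset.sum_div, ← Finset.mul_sum]
      rw [← hlam]
    rw [this, mul_div_assoc, div_self hlam0.ne', mul_one]
    have : φ i = x i - ∑ j, S i j * x j := rfl
    linarith
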